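/- Let c, i ≥ 1 be integers and let G be an edge-ordered bigraph on n vertices. Then the number of edges of G contained neither in G^{c-left}_i nor in G^{c-right}_i is at most 2·i²·c·n. -/

import Mathlib

set_option maxHeartbeats 1000000

/-- An edge-ordered graph: a finite simple graph together with an injective
real labeling of its edges (inducing a linear order on the edge set). -/
structure EOGraph (V : Type) [Fintype V] where
  graph : SimpleGraph V
  label : Sym2 V → ℝ
  inj : ∀ e ∈ graph.edgeSet, ∀ f ∈ graph.edgeSet, label e = label f → e = f

/-- `G` contains `H`: an injective, adjacency-preserving, edge-order-respecting map. -/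
def EOContains {V W : Type} [Fintype V] [Fintype W] (G : EOGraph V) (H : EOGraph W) : Prop :=
  ∃ f : W → V, Function.Injective f ∧
    (∀ a b, H.graph.Adj a b → G.graph.Adj (f a) (f b)) ∧
    ∀ e ∈ H.graph.edgeSet, ∀ e' ∈ H.graph.edgeSet,
      H.label e < H.label e' → G.label (Sym2.map f e) < G.label (Sym2.map f e')

/-- The Turán number `ex_<(n, H)`: the maximum number of edges of an
edge-ordered graph on `n` vertices avoiding `H`. -/
noncomputable def exLT {W : Type} [Fintype W] (n : ℕ) (H : EOGraph W) : ℕ :=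
  sSup {m | ∃ G : EOGraph (Fin n), ¬ EOContains G H ∧ G.graph.edgeSet.ncard = m}

/-- The reverse of an edge-ordered graph: same graph, reversed edge order. -/
def EOGraph.reverse {V : Type} [Fintype V] (G : EOGraph V) : EOGraph V where
  graph := G.graph
  label := fun e => - G.label e
  inj := fun e he f hf h => G.inj e he f hf (neg_inj.mp h)

/-- Two edges (as elements of `Sym2 V`) are adjacent if they share a vertex. -/
def EdgesAdjacent {V : Type} (e f : Sym2 V) : Prop := ∃ v, v ∈ e ∧ v ∈ f

/-- `e` and `f` are consecutive edges of `G`: `e < f` with no edge strictly in between. -/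
def Consecutive {V : Type} [Fintype V] (G : EOGraph V) (e f : Sym2 V) : Prop :=
  e ∈ G.graph.edgeSet ∧ f ∈ G.graph.edgeSet ∧ G.label e < G.label f ∧
    ¬ ∃ g ∈ G.graph.edgeSet, G.label e < G.label g ∧ G.label g < G.label f

/-- A semi-caterpillar: the underlying graph is a tree with at least one edge, and any
pair of consecutive edges is adjacent or directly connected by an edge larger than both. -/
def IsSemiCaterpillar {V : Type} [Fintype V] (G : EOGraph V) : Prop :=
  G.graph.IsTree ∧ G.graph.edgeSet.Nonempty ∧
  ∀ e f, Consecutive G e f →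
    EdgesAdjacent e f ∨
    ∃ u v, s(u, v) ∈ G.graph.edgeSet ∧ u ∈ e ∧ v ∈ f ∧
      G.label e < G.label s(u, v) ∧ G.label f < G.label s(u, v)

/-- The order chromatic number of `G` is at most `k`: there is a simple graph `H` with
chromatic number at most `k` all of whose edge-orderings contain `G`. -/
def OrderChromAtMost {V : Type} [Fintype V] (G : EOGraph V) (k : ℕ) : Prop :=
  ∃ (m : ℕ) (H : SimpleGraph (Fin m)), H.chromaticNumber ≤ (k : ℕ∞) ∧
    ∀ K : EOGraph (Fin m), K.graph = H → EOContains K G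

/-- The order chromatic number of `G` equals 2. -/
def HasOrderChrom2 {V : Type} [Fintype V] (G : EOGraph V) : Prop :=
  OrderChromAtMost G 2 ∧ ¬ OrderChromAtMost G 1

/-- A vertex is close if the edges incident to it form an interval in the edge order. -/
def CloseVertex {V : Type} [Fintype V] (G : EOGraph V) (v : V) : Prop :=
  ∀ e ∈ G.graph.edgeSet, ∀ f ∈ G.graph.edgeSet, ∀ g ∈ G.graph.edgeSet,
    v ∈ e → v ∈ g → G.label e ≤ G.label f → G.label f ≤ G.label g → v ∈ f

/-- An edge-ordered bigraph: an edge-ordered graph with a proper 2-coloring of the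
vertices into left (`false`) and right (`true`) vertices. -/
structure EOBigraph (V : Type) [Fintype V] where
  toEOGraph : EOGraph V
  side : V → Bool
  proper : ∀ u v, toEOGraph.graph.Adj u v → side u ≠ side v

/-- A right caterpillar: an edge-ordered bigraph whose underlying edge-ordered graph is a
semi-caterpillar and all of whose right vertices are close. -/
def IsRightCaterpillar {V : Type} [Fintype V] (B : EOBigraph V) : Prop :=
  IsSemiCaterpillar B.toEOGraph ∧ ∀ v, B.side v = true → CloseVertex B.toEOGraph v

/-- Containment of edge-ordered bigraphs: additionally sides must be preserved. -/
def BContains {V W : Type} [Fintype V] [Fintype W] (G : EOBigraph V) (H : EOBigraph W) : Prop :=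
  ∃ f : W → V, Function.Injective f ∧
    (∀ a b, H.toEOGraph.graph.Adj a b → G.toEOGraph.graph.Adj (f a) (f b)) ∧
    (∀ e ∈ H.toEOGraph.graph.edgeSet, ∀ e' ∈ H.toEOGraph.graph.edgeSet,
      H.toEOGraph.label e < H.toEOGraph.label e' →
        G.toEOGraph.label (Sym2.map f e) < G.toEOGraph.label (Sym2.map f e')) ∧
    ∀ a, G.side (f a) = H.side a

/-- Isomorphism of edge-ordered bigraphs. -/
def BIsoTo {V W : Type} [Fintype W] [Fintype V] (H : EOBigraph W) (G : EOBigraph V) : Prop :=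
  ∃ f : W ≃ V, (∀ a b, H.toEOGraph.graph.Adj a b ↔ G.toEOGraph.graph.Adj (f a) (f b)) ∧
    (∀ e ∈ H.toEOGraph.graph.edgeSet, ∀ e' ∈ H.toEOGraph.graph.edgeSet,
      (H.toEOGraph.label e < H.toEOGraph.label e' ↔
        G.toEOGraph.label (Sym2.map f e) < G.toEOGraph.label (Sym2.map f e'))) ∧
    ∀ a, G.side (f a) = H.side a

/-- Isomorphism of edge-ordered graphs. -/
def EOIsoTo {V W : Type} [Fintype W] [Fintype V] (H : EOGraph W) (G : EOGraph V) : Prop :=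
  ∃ f : W ≃ V, (∀ a b, H.graph.Adj a b ↔ G.graph.Adj (f a) (f b)) ∧
    ∀ e ∈ H.graph.edgeSet, ∀ e' ∈ H.graph.edgeSet,
      (H.label e < H.label e' ↔ G.label (Sym2.map f e) < G.label (Sym2.map f e'))

/-- The labeling of the path graph on `Fin k` in which the edge `{i, i+1}` gets label `w i`. -/
def pathLabel {k : ℕ} (w : Fin k → ℝ) : Sym2 (Fin k) → ℝ :=
  Sym2.lift ⟨fun i j => w (min i j), fun i j => by simp [min_comm]⟩

lemma pathGraph_edge_form {k : ℕ} {e : Sym2 (Fin k)}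
    (he : e ∈ (SimpleGraph.pathGraph k).edgeSet) :
    ∃ i j : Fin k, e = s(i, j) ∧ (i : ℕ) + 1 = (j : ℕ) := by
  induction e using Sym2.inductionOn with
  | hf a b =>
    rw [SimpleGraph.mem_edgeSet, SimpleGraph.pathGraph_adj] at he
    rcases he with h | h
    · exact ⟨a, b, rfl, h⟩
    · exact ⟨b, a, Sym2.eq_swap, h⟩

/-- The edge-ordered path on `k` vertices whose edge labels, listed along the path,
are `w 0, w 1, …, w (k-2)`. -/
def pathEO (k : ℕ) (w : Fin k → ℝ) (hw : Function.Injective w) : EOGraph (Fin k) where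
  graph := SimpleGraph.pathGraph k
  label := pathLabel w
  inj := by
    intro e he f hf hef
    obtain ⟨i, j, rfl, hij⟩ := pathGraph_edge_form he
    obtain ⟨i', j', rfl, hij'⟩ := pathGraph_edge_form hf
    have h1 : min i j = i := min_eq_left (Fin.le_def.mpr (by omega))
    have h2 : min i' j' = i' := min_eq_left (Fin.le_def.mpr (by omega))
    simp only [pathLabel, Sym2.lift_mk] at hef
    rw [h1, h2] at hef
    have hii : i = i' := hw hef
    have hjj : j = j' := Fin.ext (by omega)
    rw [hii, hjj]

/-- The edge-ordered path with natural-number labels. -/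
def pathEON (k : ℕ) (v : Fin k → ℕ) (hv : Function.Injective v) : EOGraph (Fin k) :=
  pathEO k (fun i => (v i : ℝ)) (fun a b h => hv (Nat.cast_injective h))

/-- The bipartition of the edge-ordered path `pathEON k v hv`; the starting vertex is a
right vertex iff `startRight` holds (right = `true`, left = `false`). -/
def pathEOBig (k : ℕ) (v : Fin k → ℕ) (hv : Function.Injective v) (startRight : Bool) :
    EOBigraph (Fin k) where
  toEOGraph := pathEON k v hv
  side := fun i => if i.val % 2 = 0 then startRight else !startRight
  proper := by
    intro a b hab
    have h : (SimpleGraph.pathGraph k).Adj a b := hab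
    rw [SimpleGraph.pathGraph_adj] at h
    have hpar : (a.val % 2 = 0) ↔ ¬ (b.val % 2 = 0) := by omega
    by_cases ha : a.val % 2 = 0 <;> by_cases hb : b.val % 2 = 0 <;>
      simp_all

def P4_213 : EOGraph (Fin 4) := pathEON 4 ![2,1,3,0] (by decide)
def P5_1342 : EOGraph (Fin 5) := pathEON 5 ![1,3,4,2,0] (by decide)
def P5_1432 : EOGraph (Fin 5) := pathEON 5 ![1,4,3,2,0] (by decide)
def P6_13254 : EOGraph (Fin 6) := pathEON 6 ![1,3,2,5,4,0] (by decide)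
def P6_21354 : EOGraph (Fin 6) := pathEON 6 ![2,1,3,5,4,0] (by decide)
def P6plus_13254 : EOBigraph (Fin 6) := pathEOBig 6 ![1,3,2,5,4,0] (by decide) true
def P6minus_13254 : EOBigraph (Fin 6) := pathEOBig 6 ![1,3,2,5,4,0] (by decide) false
def P5plus_2143 : EOBigraph (Fin 5) := pathEOBig 5 ![2,1,4,3,0] (by decide) true
def P5minus_2143 : EOBigraph (Fin 5) := pathEOBig 5 ![2,1,4,3,0] (by decide) false

/-- `B'` is an extension of `B`: it is obtained by adding new edges, each connecting an end
of the smallest edge `s(x,y)` of `B` to a new degree-1 vertex, all new edges being smaller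
than `s(x,y)`, and all new edges at the left end being smaller than those at the right end. -/
def IsExtensionOf {V' V : Type} [Fintype V'] [Fintype V]
    (B' : EOBigraph V') (B : EOBigraph V) : Prop :=
  ∃ (ι : V → V') (x y : V),
    Function.Injective ι ∧
    B.toEOGraph.graph.Adj x y ∧ B.side x = false ∧ B.side y = true ∧
    (∀ e ∈ B.toEOGraph.graph.edgeSet, B.toEOGraph.label s(x, y) ≤ B.toEOGraph.label e) ∧
    (∀ a b, B.toEOGraph.graph.Adj a b ↔ B'.toEOGraph.graph.Adj (ι a) (ι b)) ∧
    (∀ a, B'.side (ι a) = B.side a) ∧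
    (∀ e ∈ B.toEOGraph.graph.edgeSet, ∀ f ∈ B.toEOGraph.graph.edgeSet,
      (B.toEOGraph.label e < B.toEOGraph.label f ↔
        B'.toEOGraph.label (Sym2.map ι e) < B'.toEOGraph.label (Sym2.map ι f))) ∧
    (∀ w : V', w ∉ Set.range ι →
      (∃! u, B'.toEOGraph.graph.Adj w u) ∧
      (∀ u, B'.toEOGraph.graph.Adj w u → (u = ι x ∨ u = ι y) ∧
        B'.toEOGraph.label s(w, u) < B'.toEOGraph.label s(ι x, ι y))) ∧
    (∀ w w' : V', w ∉ Set.range ι → w' ∉ Set.range ι →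
      B'.toEOGraph.graph.Adj w (ι x) → B'.toEOGraph.graph.Adj w' (ι y) →
      B'.toEOGraph.label s(w, ι x) < B'.toEOGraph.label s(w', ι y))

/-- A bundled edge-ordered bigraph (on some `Fin n`). -/
structure BundledBigraph where
  n : ℕ
  big : EOBigraph (Fin n)

/-- `B` is (isomorphic to) `T₀`, the edge-ordered bigraph with one edge and two vertices. -/
def IsT0 {V : Type} [Fintype V] (B : EOBigraph V) : Prop :=
  Fintype.card V = 2 ∧ ∀ u v : V, u ≠ v → B.toEOGraph.graph.Adj u v

/-- `B` can be obtained (up to isomorphism) from `T₀` by a sequence of `i` extensions. -/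
def ReachedInSteps {V : Type} [Fintype V] (i : ℕ) (B : EOBigraph V) : Prop :=
  ∃ f : ℕ → BundledBigraph, IsT0 (f 0).big ∧ BIsoTo (f i).big B ∧
    ∀ j < i, IsExtensionOf (f (j+1)).big (f j).big

/-- The recursive depth of a right caterpillar: the minimum number of extension steps
needed to obtain it from `T₀`. -/
def HasRecursiveDepth {V : Type} [Fintype V] (B : EOBigraph V) (i : ℕ) : Prop :=
  ReachedInSteps i B ∧ ∀ j < i, ¬ ReachedInSteps j B

/-- An edge `e` (with left end `x` and right end `y`) is `c`-left-leaning: there are `c` edges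
at `x` and `c` edges at `y` with every edge of the latter set larger than every edge of the
former, but smaller than `e`. -/
def LeftLeaning {V : Type} [Fintype V] (c : ℕ) (G : EOBigraph V) (e : Sym2 V) : Prop :=
  ∃ x y : V, e = s(x, y) ∧ e ∈ G.toEOGraph.graph.edgeSet ∧
    G.side x = false ∧ G.side y = true ∧
    ∃ S S' : Finset (Sym2 V), S.card = c ∧ S'.card = c ∧
      (∀ f ∈ S, f ∈ G.toEOGraph.graph.edgeSet ∧ x ∈ f) ∧
      (∀ f ∈ S', f ∈ G.toEOGraph.graph.edgeSet ∧ y ∈ f) ∧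
      (∀ f ∈ S, ∀ f' ∈ S', G.toEOGraph.label f < G.toEOGraph.label f') ∧
      (∀ f' ∈ S', G.toEOGraph.label f' < G.toEOGraph.label e)

/-- An edge `e` (with left end `x` and right end `y`) is `c`-right-leaning. -/
def RightLeaning {V : Type} [Fintype V] (c : ℕ) (G : EOBigraph V) (e : Sym2 V) : Prop :=
  ∃ x y : V, e = s(x, y) ∧ e ∈ G.toEOGraph.graph.edgeSet ∧
    G.side x = false ∧ G.side y = true ∧
    ∃ S S' : Finset (Sym2 V), S.card = c ∧ S'.card = c ∧
      (∀ f ∈ S, f ∈ G.toEOGraph.graph.edgeSet ∧ x ∈ f) ∧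
      (∀ f ∈ S', f ∈ G.toEOGraph.graph.edgeSet ∧ y ∈ f) ∧
      (∀ f' ∈ S', ∀ f ∈ S, G.toEOGraph.label f' < G.toEOGraph.label f) ∧
      (∀ f ∈ S, G.toEOGraph.label f < G.toEOGraph.label e)

/-- The spanning sub-bigraph of `G` consisting of the edges satisfying `P`. -/
def bigraphRestrict {V : Type} [Fintype V] (G : EOBigraph V) (P : Sym2 V → Prop) :
    EOBigraph V where
  toEOGraph :=
    { graph := SimpleGraph.fromEdgeSet {e | e ∈ G.toEOGraph.graph.edgeSet ∧ P e}
      label := G.toEOGraph.label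
      inj := by
        intro e he f hf h
        rw [SimpleGraph.edgeSet_fromEdgeSet] at he hf
        exact G.toEOGraph.inj e he.1.1 f hf.1.1 h }
  side := G.side
  proper := by
    intro u v huv
    rw [SimpleGraph.fromEdgeSet_adj] at huv
    have h1 : s(u, v) ∈ G.toEOGraph.graph.edgeSet := huv.1.1
    exact G.proper u v ((SimpleGraph.mem_edgeSet _).mp h1)

/-- The spanning subgraph of the `c`-left-leaning edges. -/
def leftSub {V : Type} [Fintype V] (c : ℕ) (G : EOBigraph V) : EOBigraph V :=
  bigraphRestrict G (LeftLeaning c G)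

/-- The spanning subgraph of the `c`-right-leaning edges. -/
def rightSub {V : Type} [Fintype V] (c : ℕ) (G : EOBigraph V) : EOBigraph V :=
  bigraphRestrict G (RightLeaning c G)

/-- `G^{c-left}_i`: iteratively keep only `c`-left-leaning edges, `i` times. -/
def leftIter {V : Type} [Fintype V] (c i : ℕ) (G : EOBigraph V) : EOBigraph V :=
  (leftSub c)^[i] G

/-- `G^{c-right}_i`: iteratively keep only `c`-right-leaning edges, `i` times. -/
def rightIter {V : Type} [Fintype V] (c i : ℕ) (G : EOBigraph V) : EOBigraph V :=
  (rightSub c)^[i] G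

/-- The set of labels of edges incident to `v`. -/
def incidentLabels {V : Type} [Fintype V] (G : EOGraph V) (v : V) : Set ℝ :=
  G.label '' {e | e ∈ G.graph.edgeSet ∧ v ∈ e}

/-- The vertex label `l(v)`: the second smallest label among the edges incident to `v`
(meaningful when `v` has degree at least 2). -/
noncomputable def secondLabel {V : Type} [Fintype V] (G : EOGraph V) (v : V) : ℝ :=
  sInf (incidentLabels G v \ {sInf (incidentLabels G v)})

/-- `v` has degree at least 2. -/
def DegTwo {V : Type} [Fintype V] (G : EOGraph V) (v : V) : Prop :=
  2 ≤ {e | e ∈ G.graph.edgeSet ∧ v ∈ e}.ncard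

/-- An edge `xy` (left end `x`, right end `y`) is left inclined if `l(x) < l(y) ≤ L(xy)`. -/
def LeftInclined {V : Type} [Fintype V] (G : EOBigraph V) (e : Sym2 V) : Prop :=
  ∃ x y : V, e = s(x, y) ∧ e ∈ G.toEOGraph.graph.edgeSet ∧
    G.side x = false ∧ G.side y = true ∧
    DegTwo G.toEOGraph x ∧ DegTwo G.toEOGraph y ∧
    secondLabel G.toEOGraph x < secondLabel G.toEOGraph y ∧
    secondLabel G.toEOGraph y ≤ G.toEOGraph.label e

/-- An edge `xy` (left end `x`, right end `y`) is right inclined if `l(y) < l(x) ≤ L(xy)`. -/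
def RightInclined {V : Type} [Fintype V] (G : EOBigraph V) (e : Sym2 V) : Prop :=
  ∃ x y : V, e = s(x, y) ∧ e ∈ G.toEOGraph.graph.edgeSet ∧
    G.side x = false ∧ G.side y = true ∧
    DegTwo G.toEOGraph x ∧ DegTwo G.toEOGraph y ∧
    secondLabel G.toEOGraph y < secondLabel G.toEOGraph x ∧
    secondLabel G.toEOGraph x ≤ G.toEOGraph.label e

/-- `G_l`: the spanning sub-bigraph of the left inclined edges of `G`. -/
def inclinedLeftSub {V : Type} [Fintype V] (G : EOBigraph V) : EOBigraph V :=
  bigraphRestrict G (LeftInclined G)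

/-- `G_r`: the spanning sub-bigraph of the right inclined edges of `G`. -/
def inclinedRightSub {V : Type} [Fintype V] (G : EOBigraph V) : EOBigraph V :=
  bigraphRestrict G (RightInclined G)

/-- The underlying simple graph of `P` is a path. -/
def IsPathEO {V : Type} [Fintype V] (P : EOGraph V) : Prop :=
  ∃ (k : ℕ) (f : V ≃ Fin k), ∀ a b, P.graph.Adj a b ↔ (SimpleGraph.pathGraph k).Adj (f a) (f b)

/-- A monotone path: the labels increase (or decrease) monotonically along the path. -/
def IsMonotonePath {V : Type} [Fintype V] (P : EOGraph V) : Prop :=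
  ∃ (k : ℕ) (w : Fin k → ℝ) (hw : Function.Injective w),
    (StrictMono w ∨ StrictAnti w) ∧ EOIsoTo (pathEO k w hw) P

/-- A flipped path: obtained from a monotone path (with at least 3 edges) by swapping
either the two smallest or the two largest labels. -/
def IsFlippedPath {V : Type} [Fintype V] (P : EOGraph V) : Prop :=
  ∃ (k : ℕ) (hk : 4 ≤ k) (w : Fin k → ℝ) (hw : StrictMono w),
    EOIsoTo (pathEO k (w ∘ (Equiv.swap (⟨0, by omega⟩ : Fin k) ⟨1, by omega⟩))
      (hw.injective.comp (Equiv.injective _))) P ∨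
    EOIsoTo (pathEO k (w ∘ (Equiv.swap (⟨k-3, by omega⟩ : Fin k) ⟨k-2, by omega⟩))
      (hw.injective.comp (Equiv.injective _))) P

/-- 0-1 matrix containment: `A` contains `B` if `B` can be obtained from a submatrix of `A`
by possibly changing some 1 entries to 0. -/
def MContains {m n p q : ℕ} (A : Fin m → Fin n → Bool) (B : Fin p → Fin q → Bool) : Prop :=
  ∃ (r : Fin p → Fin m) (c : Fin q → Fin n), StrictMono r ∧ StrictMono c ∧
    ∀ i j, B i j = true → A (r i) (c j) = true

/-- The extremal function of a 0-1 matrix `B`: the maximum number of 1 entries in an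
`n × n` 0-1 matrix avoiding `B`. -/
noncomputable def mex {p q : ℕ} (n : ℕ) (B : Fin p → Fin q → Bool) : ℕ :=
  sSup {k | ∃ A : Fin n → Fin n → Bool, ¬ MContains A B ∧
    k = (Finset.univ.filter fun ij : Fin n × Fin n => A ij.1 ij.2 = true).card}

/-- The staircase with positions `p 0, …, p t` describes the matrix `A`. -/
def DescribedBy {nr nc : ℕ} (A : Fin nr → Fin nc → Bool) (t : ℕ)
    (p : Fin (t + 1) → Fin nr × Fin nc) : Prop :=
  (∀ k : Fin t,
      ((p k.succ).1.val = (p k.castSucc).1.val + 1 ∧ (p k.succ).2 = (p k.castSucc).2) ∨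
      ((p k.succ).1 = (p k.castSucc).1 ∧ (p k.succ).2.val = (p k.castSucc).2.val + 1)) ∧
  ∀ i j, A i j = true ↔
    ((∃ k, p k = (i, j)) ∨
     (i = (p 0).1 ∧ j < (p 0).2) ∨ (j = (p 0).2 ∧ i < (p 0).1) ∨
     (i = (p (Fin.last t)).1 ∧ (p (Fin.last t)).2 < j) ∨
     (j = (p (Fin.last t)).2 ∧ (p (Fin.last t)).1 < i))

/-- A staircase matrix: `A`, or `A` with the order of its columns reversed, is described
by a staircase. -/
def IsStaircaseMatrix {nr nc : ℕ} (A : Fin nr → Fin nc → Bool) : Prop :=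
  (∃ t p, DescribedBy A t p) ∨ (∃ t p, DescribedBy (fun i j => A i j.rev) t p)

/-- The bipartite graph whose bipartite adjacency matrix is `A`. -/
def MatrixGraph {nr nc : ℕ} (A : Fin nr → Fin nc → Bool) : SimpleGraph (Fin nr ⊕ Fin nc) :=
  SimpleGraph.fromRel fun u v =>
    match u, v with
    | .inl i, .inr j => A i j = true
    | _, _ => False

/-- A connected 0-1 matrix: the bipartite adjacency matrix of a connected graph. -/
def IsConnectedMatrix {nr nc : ℕ} (A : Fin nr → Fin nc → Bool) : Prop :=
  (MatrixGraph A).Connected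

variable {V : Type} [Fintype V]

lemma restrict_side (G : EOBigraph V) (P : Sym2 V → Prop) :
    (bigraphRestrict G P).side = G.side := rfl

lemma restrict_label (G : EOBigraph V) (P : Sym2 V → Prop) :
    (bigraphRestrict G P).toEOGraph.label = G.toEOGraph.label := rfl

lemma restrict_edges (G : EOBigraph V) (P : Sym2 V → Prop) :
    (bigraphRestrict G P).toEOGraph.graph.edgeSet ⊆ G.toEOGraph.graph.edgeSet := by
  intro e he
  have : (bigraphRestrict G P).toEOGraph.graph.edgeSet
      = {e | e ∈ G.toEOGraph.graph.edgeSet ∧ P e} \ {e | e.IsDiag} :=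
    SimpleGraph.edgeSet_fromEdgeSet _
  rw [this] at he
  exact he.1.1

lemma mem_restrict_edges {G : EOBigraph V} {P : Sym2 V → Prop} {e : Sym2 V}
    (he : e ∈ G.toEOGraph.graph.edgeSet) (hP : P e) :
    e ∈ (bigraphRestrict G P).toEOGraph.graph.edgeSet := by
  have : (bigraphRestrict G P).toEOGraph.graph.edgeSet
      = {e | e ∈ G.toEOGraph.graph.edgeSet ∧ P e} \ {e | e.IsDiag} :=
    SimpleGraph.edgeSet_fromEdgeSet _
  rw [this]
  exact ⟨⟨he, hP⟩, G.toEOGraph.graph.not_isDiag_of_mem_edgeSet he⟩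

lemma leftIter_side (c j : ℕ) (G : EOBigraph V) : (leftIter c j G).side = G.side := by
  induction j with
  | zero => rfl
  | succ n ih =>
    rw [leftIter, Function.iterate_succ_apply']
    exact (restrict_side _ _).trans (ih)

lemma leftIter_label (c j : ℕ) (G : EOBigraph V) :
    (leftIter c j G).toEOGraph.label = G.toEOGraph.label := by
  induction j with
  | zero => rfl
  | succ n ih =>
    rw [leftIter, Function.iterate_succ_apply']
    exact (restrict_label _ _).trans ih

lemma leftIter_edges (c j : ℕ) (G : EOBigraph V) :
    (leftIter c j G).toEOGraph.graph.edgeSet ⊆ G.toEOGraph.graph.edgeSet := by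
  induction j with
  | zero => exact subset_rfl
  | succ n ih =>
    rw [leftIter, Function.iterate_succ_apply']
    exact subset_trans (restrict_edges _ _) ih

lemma rightIter_side (c j : ℕ) (G : EOBigraph V) : (rightIter c j G).side = G.side := by
  induction j with
  | zero => rfl
  | succ n ih =>
    rw [rightIter, Function.iterate_succ_apply']
    exact (restrict_side _ _).trans ih

lemma rightIter_label (c j : ℕ) (G : EOBigraph V) :
    (rightIter c j G).toEOGraph.label = G.toEOGraph.label := by
  induction j with
  | zero => rfl
  | succ n ih =>
    rw [rightIter, Function.iterate_succ_apply']
    exact (restrict_label _ _).trans ih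

lemma rightIter_edges (c j : ℕ) (G : EOBigraph V) :
    (rightIter c j G).toEOGraph.graph.edgeSet ⊆ G.toEOGraph.graph.edgeSet := by
  induction j with
  | zero => exact subset_rfl
  | succ n ih =>
    rw [rightIter, Function.iterate_succ_apply']
    exact subset_trans (restrict_edges _ _) ih

lemma not_leftLeaning_of_dropped {c j : ℕ} {G : EOBigraph V} {e : Sym2 V}
    (he : e ∈ (leftIter c j G).toEOGraph.graph.edgeSet)
    (hne : e ∉ (leftIter c (j + 1) G).toEOGraph.graph.edgeSet) :
    ¬ LeftLeaning c (leftIter c j G) e := by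
  intro hL
  apply hne
  rw [leftIter, Function.iterate_succ_apply']
  exact mem_restrict_edges he hL

lemma not_rightLeaning_of_dropped {c j : ℕ} {G : EOBigraph V} {e : Sym2 V}
    (he : e ∈ (rightIter c j G).toEOGraph.graph.edgeSet)
    (hne : e ∉ (rightIter c (j + 1) G).toEOGraph.graph.edgeSet) :
    ¬ RightLeaning c (rightIter c j G) e := by
  intro hL
  apply hne
  rw [rightIter, Function.iterate_succ_apply']
  exact mem_restrict_edges he hL

lemma exists_sides {G : EOBigraph V} {e : Sym2 V} (he : e ∈ G.toEOGraph.graph.edgeSet) :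
    ∃ x y : V, e = s(x, y) ∧ G.side x = false ∧ G.side y = true := by
  induction e using Sym2.inductionOn with
  | hf a b =>
    have hadj : G.toEOGraph.graph.Adj a b := (SimpleGraph.mem_edgeSet _).mp he
    have hne := G.proper a b hadj
    cases ha : G.side a <;> cases hb : G.side b
    · rw [ha, hb] at hne; exact absurd rfl hne
    · exact ⟨a, b, rfl, ha, hb⟩
    · exact ⟨b, a, Sym2.eq_swap, hb, ha⟩
    · rw [ha, hb] at hne; exact absurd rfl hne

open Finset in
lemma extract_smallest {α : Type*} [DecidableEq α] (L : α → ℝ) :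
    ∀ (c : ℕ) (T : Finset α), (∀ s ∈ T, ∀ t ∈ T, L s = L t → s = t) → c ≤ T.card →
    ∃ S ⊆ T, S.card = c ∧ ∀ s ∈ S, ∀ t ∈ T, t ∉ S → L s < L t := by
  intro c
  induction c with
  | zero => intro T _ _; exact ⟨∅, Finset.empty_subset _, rfl, by simp⟩
  | succ c ih =>
    intro T hinj hc
    have hne : T.Nonempty := Finset.card_pos.mp (by omega)
    obtain ⟨m, hm, hmin⟩ := T.exists_min_image L hne
    have hcard : c ≤ (T.erase m).card := by rw [Finset.card_erase_of_mem hm]; omega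
    obtain ⟨S, hS, hScard, hSlt⟩ := ih (T.erase m)
      (fun s hs t ht => hinj s (Finset.mem_of_mem_erase hs) t (Finset.mem_of_mem_erase ht)) hcard
    have hmS : m ∉ S := fun h => (Finset.mem_erase.mp (hS h)).1 rfl
    refine ⟨insert m S, ?_, ?_, ?_⟩
    · intro a ha
      rcases Finset.mem_insert.mp ha with rfl | h
      · exact hm
      · exact Finset.mem_of_mem_erase (hS h)
    · rw [Finset.card_insert_of_notMem hmS, hScard]
    · intro s hs t ht hts
      rcases Finset.mem_insert.mp hs with rfl | hsS
      · have hle := hmin t ht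
        have hne2 : s ≠ t := fun h => hts (h ▸ Finset.mem_insert_self _ _)
        rcases lt_or_eq_of_le hle with h | h
        · exact h
        · exact absurd (hinj s hm t ht h) hne2
      · exact hSlt s hsS t
          (Finset.mem_erase.mpr ⟨fun h => hts (h ▸ Finset.mem_insert_self _ _), ht⟩)
          (fun h => hts (Finset.mem_insert_of_mem h))

open Classical in
lemma dichotomy (c : ℕ) (hc : 1 ≤ c) (Lg Rg : EOBigraph V)
    (hside : Rg.side = Lg.side) (hlab : Rg.toEOGraph.label = Lg.toEOGraph.label)
    {e : Sym2 V} (heL : e ∈ Lg.toEOGraph.graph.edgeSet) (heR : e ∈ Rg.toEOGraph.graph.edgeSet)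
    (hnl : ¬ LeftLeaning c Lg e) (hnr : ¬ RightLeaning c Rg e) :
    ∃ v ∈ e, {f | f ∈ Lg.toEOGraph.graph.edgeSet ∧ f ∈ Rg.toEOGraph.graph.edgeSet ∧
      v ∈ f ∧ Lg.toEOGraph.label f < Lg.toEOGraph.label e}.ncard < 2 * c := by
  obtain ⟨x, y, rfl, hsx, hsy⟩ := exists_sides heL
  by_contra hcon
  push_neg at hcon
  set L := Lg.toEOGraph.label with hL
  have hx : x ∈ s(x, y) := Sym2.mem_mk_left x y
  have hy : y ∈ s(x, y) := Sym2.mem_mk_right x y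
  -- the finsets of below-edges at x and at y
  set SA : Set (Sym2 V) := {f | f ∈ Lg.toEOGraph.graph.edgeSet ∧ f ∈ Rg.toEOGraph.graph.edgeSet ∧
      x ∈ f ∧ L f < L s(x, y)} with hSA
  set SB : Set (Sym2 V) := {f | f ∈ Lg.toEOGraph.graph.edgeSet ∧ f ∈ Rg.toEOGraph.graph.edgeSet ∧
      y ∈ f ∧ L f < L s(x, y)} with hSB
  have hAfin : SA.Finite := Set.toFinite _
  have hBfin : SB.Finite := Set.toFinite _
  set AF := hAfin.toFinset with hAF
  set BF := hBfin.toFinset with hBF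
  have hAcard : 2 * c ≤ AF.card := by
    rw [← Set.ncard_eq_toFinset_card SA hAfin]; exact hcon x hx
  have hBcard : 2 * c ≤ BF.card := by
    rw [← Set.ncard_eq_toFinset_card SB hBfin]; exact hcon y hy
  have hmemA : ∀ f, f ∈ AF ↔ f ∈ SA := fun f => hAfin.mem_toFinset
  have hmemB : ∀ f, f ∈ BF ↔ f ∈ SB := fun f => hBfin.mem_toFinset
  have hinjA : ∀ s ∈ AF, ∀ t ∈ AF, L s = L t → s = t := by
    intro s hs t ht hst
    exact Lg.toEOGraph.inj s ((hmemA s).mp hs).1 t ((hmemA t).mp ht).1 hst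
  obtain ⟨S₁, hS₁sub, hS₁card, hS₁lt⟩ := extract_smallest L c AF hinjA (by omega)
  have hS₁ne : S₁.Nonempty := Finset.card_pos.mp (by omega)
  obtain ⟨m, hmS₁, hmax⟩ := S₁.exists_max_image L hS₁ne
  set a := L m with ha
  have hkey : ∀ t ∈ AF, t ∉ S₁ → a < L t := fun t ht hts => hS₁lt m hmS₁ t ht hts
  set Bhi := BF.filter (fun f => a < L f) with hBhi
  rcases le_or_gt c Bhi.card with hcase | hcase
  · -- left-leaning
    obtain ⟨S', hS'sub, hS'card⟩ := Finset.exists_subset_card_eq hcase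
    apply hnl
    refine ⟨x, y, rfl, heL, hsx, hsy, S₁, S', hS₁card, hS'card, ?_, ?_, ?_, ?_⟩
    · intro f hf
      have := (hmemA f).mp (hS₁sub hf)
      exact ⟨this.1, this.2.2.1⟩
    · intro f hf
      have := (hmemB f).mp (Finset.mem_of_mem_filter f (hS'sub hf))
      exact ⟨this.1, this.2.2.1⟩
    · intro f hf f' hf'
      have h1 : L f ≤ a := hmax f hf
      have h2 : a < L f' := (Finset.mem_filter.mp (hS'sub hf')).2
      exact lt_of_le_of_lt h1 h2
    · intro f' hf'
      exact ((hmemB f').mp (Finset.mem_of_mem_filter f' (hS'sub hf'))).2.2.2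
  · -- right-leaning
    have hBlo : c ≤ (BF.filter (fun f => ¬ a < L f)).card := by
      have := Finset.card_filter_add_card_filter_not (s := BF) (p := fun f => a < L f)
      rw [hBhi] at hcase
      omega
    obtain ⟨S', hS'sub, hS'card⟩ := Finset.exists_subset_card_eq hBlo
    have hAdiff : c ≤ (AF \ S₁).card := by
      rw [Finset.card_sdiff_of_subset hS₁sub]; omega
    obtain ⟨S₂, hS₂sub, hS₂card⟩ := Finset.exists_subset_card_eq hAdiff
    apply hnr
    refine ⟨x, y, rfl, heR, by rw [hside]; exact hsx, by rw [hside]; exact hsy,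
      S₂, S', hS₂card, hS'card, ?_, ?_, ?_, ?_⟩
    · intro f hf
      have := (hmemA f).mp (Finset.mem_sdiff.mp (hS₂sub hf)).1
      exact ⟨this.2.1, this.2.2.1⟩
    · intro f hf
      have := (hmemB f).mp (Finset.mem_of_mem_filter f (hS'sub hf))
      exact ⟨this.2.1, this.2.2.1⟩
    · intro f' hf' f hf
      rw [hlab]
      have h1 : L f' ≤ a := le_of_not_gt (Finset.mem_filter.mp (hS'sub hf')).2
      have h2 : a < L f := by
        obtain ⟨hfA, hfS₁⟩ := Finset.mem_sdiff.mp (hS₂sub hf)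
        exact hkey f hfA hfS₁
      exact lt_of_le_of_lt h1 h2
    · intro f hf
      rw [hlab]
      exact ((hmemA f).mp (Finset.mem_sdiff.mp (hS₂sub hf)).1).2.2.2

lemma card_le_of_few_below {α : Type*} [DecidableEq α] (L : α → ℝ) (m : ℕ) (T : Finset α)
    (hinj : ∀ s ∈ T, ∀ t ∈ T, L s = L t → s = t)
    (h : ∀ e ∈ T, (T.filter (fun f => L f < L e)).card ≤ m) : T.card ≤ m + 1 := by
  rcases T.eq_empty_or_nonempty with rfl | hne
  · simp
  obtain ⟨e, he, hmax⟩ := T.exists_max_image L hne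
  have hsub : T.erase e ⊆ T.filter (fun f => L f < L e) := by
    intro f hf
    obtain ⟨hfe, hfT⟩ := Finset.mem_erase.mp hf
    refine Finset.mem_filter.mpr ⟨hfT, ?_⟩
    rcases lt_or_eq_of_le (hmax f hfT) with h' | h'
    · exact h'
    · exact absurd (hinj f hfT e he h') hfe
  have h1 := Finset.card_le_card hsub
  have h2 := h e he
  have h3 := Finset.card_erase_of_mem he
  omega

lemma exists_crossing (P : ℕ → Prop) : ∀ i, P 0 → ¬ P i → ∃ j < i, P j ∧ ¬ P (j + 1) := by
  intro i
  induction i with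
  | zero => intro h0 hi; exact absurd h0 hi
  | succ n ih =>
    intro h0 hi
    by_cases hn : P n
    · exact ⟨n, Nat.lt_succ_self n, hn, hi⟩
    · obtain ⟨j, hj, h⟩ := ih h0 hn
      exact ⟨j, hj.trans (Nat.lt_succ_self n), h⟩

/-- Auxiliary set: edges of both iterated subgraphs at `v` with few smaller edges at `v`. -/
def stmtTset (c j k : ℕ) (G : EOBigraph V) (v : V) : Set (Sym2 V) :=
  {e | e ∈ (leftIter c j G).toEOGraph.graph.edgeSet ∧
       e ∈ (rightIter c k G).toEOGraph.graph.edgeSet ∧ v ∈ e ∧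
    {f | f ∈ (leftIter c j G).toEOGraph.graph.edgeSet ∧
         f ∈ (rightIter c k G).toEOGraph.graph.edgeSet ∧ v ∈ f ∧
         (leftIter c j G).toEOGraph.label f < (leftIter c j G).toEOGraph.label e}.ncard < 2 * c}

lemma stmtTset_card (c j k : ℕ) (hc : 1 ≤ c) (G : EOBigraph V) (v : V) :
    (Set.toFinite (stmtTset c j k G v)).toFinset.card ≤ 2 * c := by
  classical
  set Lab := (leftIter c j G).toEOGraph.label with hLab
  set TF := (Set.toFinite (stmtTset c j k G v)).toFinset with hTF
  have hmem : ∀ e, e ∈ TF ↔ e ∈ stmtTset c j k G v := fun e => Set.Finite.mem_toFinset _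
  have hb : ∀ e ∈ TF, (TF.filter (fun f => Lab f < Lab e)).card ≤ 2 * c - 1 := by
    intro e he
    obtain ⟨heL, heR, hv, hcount⟩ := (hmem e).mp he
    have hfin : ({f | f ∈ (leftIter c j G).toEOGraph.graph.edgeSet ∧
         f ∈ (rightIter c k G).toEOGraph.graph.edgeSet ∧ v ∈ f ∧
         Lab f < Lab e} : Set (Sym2 V)).Finite := Set.toFinite _
    have hsub : TF.filter (fun f => Lab f < Lab e) ⊆ hfin.toFinset := by
      intro f hf
      obtain ⟨hfT, hflt⟩ := Finset.mem_filter.mp hf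
      obtain ⟨h1, h2, h3, _⟩ := (hmem f).mp hfT
      exact hfin.mem_toFinset.mpr ⟨h1, h2, h3, hflt⟩
    have h1 := Finset.card_le_card hsub
    have h2 : hfin.toFinset.card < 2 * c := by
      rw [← Set.ncard_eq_toFinset_card _ hfin]
      exact hcount
    omega
  have hinj : ∀ s ∈ TF, ∀ t ∈ TF, Lab s = Lab t → s = t := by
    intro s hs t ht hst
    exact (leftIter c j G).toEOGraph.inj s ((hmem s).mp hs).1 t ((hmem t).mp ht).1 hst
  have := card_le_of_few_below Lab (2 * c - 1) TF hinj hb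
  omega

/-- For `c, i ≥ 1`, at most `2·i²·c·n` edges of an edge-ordered bigraph `G` on
`n` vertices are contained neither in `G^{c-left}_i` nor in `G^{c-right}_i`. -/
theorem stmt_5 {V : Type} [Fintype V] (c i : ℕ) (hc : 1 ≤ c) (hi : 1 ≤ i) (G : EOBigraph V) :
    {e | e ∈ G.toEOGraph.graph.edgeSet ∧
         e ∉ (leftIter c i G).toEOGraph.graph.edgeSet ∧
         e ∉ (rightIter c i G).toEOGraph.graph.edgeSet}.ncard
      ≤ 2 * i ^ 2 * c * Fintype.card V := by
  classical
  set Bad : Set (Sym2 V) := {e | e ∈ G.toEOGraph.graph.edgeSet ∧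
         e ∉ (leftIter c i G).toEOGraph.graph.edgeSet ∧
         e ∉ (rightIter c i G).toEOGraph.graph.edgeSet} with hBad
  have hBadfin : Bad.Finite := Set.toFinite _
  rw [Set.ncard_eq_toFinset_card _ hBadfin]
  set U : Finset (Sym2 V) := (Finset.range i).biUnion fun j =>
    (Finset.range i).biUnion fun k =>
      Finset.univ.biUnion fun v : V => (Set.toFinite (stmtTset c j k G v)).toFinset with hU
  have hsub : hBadfin.toFinset ⊆ U := by
    intro e he
    obtain ⟨heG, hnoL, hnoR⟩ := hBadfin.mem_toFinset.mp he
    obtain ⟨j, hj, hjin, hjout⟩ := exists_crossing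
      (fun j => e ∈ (leftIter c j G).toEOGraph.graph.edgeSet) i heG hnoL
    obtain ⟨k, hk, hkin, hkout⟩ := exists_crossing
      (fun k => e ∈ (rightIter c k G).toEOGraph.graph.edgeSet) i heG hnoR
    have hnl := not_leftLeaning_of_dropped hjin hjout
    have hnr := not_rightLeaning_of_dropped hkin hkout
    obtain ⟨v, hv, hcount⟩ := dichotomy c hc (leftIter c j G) (rightIter c k G)
      (by rw [rightIter_side, leftIter_side])
      (by rw [rightIter_label, leftIter_label]) hjin hkin hnl hnr
    refine Finset.mem_biUnion.mpr ⟨j, Finset.mem_range.mpr hj,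
      Finset.mem_biUnion.mpr ⟨k, Finset.mem_range.mpr hk,
      Finset.mem_biUnion.mpr ⟨v, Finset.mem_univ v, ?_⟩⟩⟩
    exact (Set.Finite.mem_toFinset _).mpr ⟨hjin, hkin, hv, hcount⟩
  calc hBadfin.toFinset.card ≤ U.card := Finset.card_le_card hsub
    _ ≤ ∑ j ∈ Finset.range i, ((Finset.range i).biUnion fun k =>
          Finset.univ.biUnion fun v : V => (Set.toFinite (stmtTset c j k G v)).toFinset).card :=
        Finset.card_biUnion_le
    _ ≤ ∑ j ∈ Finset.range i, ∑ k ∈ Finset.range i,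
          (Finset.univ.biUnion fun v : V => (Set.toFinite (stmtTset c j k G v)).toFinset).card :=
        Finset.sum_le_sum fun j _ => Finset.card_biUnion_le
    _ ≤ ∑ j ∈ Finset.range i, ∑ k ∈ Finset.range i, ∑ v : V,
          ((Set.toFinite (stmtTset c j k G v)).toFinset).card :=
        Finset.sum_le_sum fun j _ => Finset.sum_le_sum fun k _ => Finset.card_biUnion_le
    _ ≤ ∑ j ∈ Finset.range i, ∑ k ∈ Finset.range i, ∑ v : V, 2 * c :=
        Finset.sum_le_sum fun j _ => Finset.sum_le_sum fun k _ =>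
          Finset.sum_le_sum fun v _ => stmtTset_card c j k hc G v
    _ = i * (i * (Fintype.card V * (2 * c))) := by
        simp [Finset.sum_const, Finset.card_range, smul_eq_mul]
    _ = 2 * i ^ 2 * c * Fintype.card V := by ring
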